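/- For any m, n ≥ 1 and q_1,…,q_n ∈ (0,1), the sum of dual Grothendieck polynomials over all partitions with at most m parts satisfies Σ_{λ ∈ P_m} g_λ(q_1,…,q_n) = ∏_{i=1}^n (1−q_i)^{−m}. -/

import Mathlib

open scoped BigOperators

/-- A plane partition: an ℕ-matrix (indexed from 0) with finitely many nonzero
entries, weakly decreasing along rows and columns. -/
structure PlanePartition where
  entry : ℕ → ℕ → ℕ
  finite_support : (Function.support fun p : ℕ × ℕ => entry p.1 p.2).Finite
  row_dec : ∀ i j, entry i (j + 1) ≤ entry i j
  col_dec : ∀ i j, entry (i + 1) j ≤ entry i j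

/-- `c_ℓ(π)`: the number of columns of `π` containing the entry `ℓ`. -/
noncomputable def colCount (π : PlanePartition) (ℓ : ℕ) : ℕ :=
  {j | ∃ i, π.entry i j = ℓ}.ncard

/-- `d_{iℓ}`: the number of columns `j` with `π_{ij} = ℓ > π_{i+1,j}` (row `i` indexed from 0,
`ℓ` an actual entry value). -/
noncomputable def dstat (π : PlanePartition) (i ℓ : ℕ) : ℕ :=
  {j | π.entry i j = ℓ ∧ π.entry (i + 1) j < ℓ}.ncard

/-- `λ_k`: the number of positive entries in row `k` (indexed from 0) of `π`. -/
noncomputable def part (π : PlanePartition) (k : ℕ) : ℕ :=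
  {j | 0 < π.entry k j}.ncard

/-- `π` has shape `λ` (with `λ : ℕ → ℕ` indexed from 0). -/
def HasShape (π : PlanePartition) (lam : ℕ → ℕ) : Prop :=
  ∀ k, part π k = lam k

/-- `λ` is an integer partition with at most `m` parts (indexed from 0). -/
def IsPartWithParts (m : ℕ) (lam : ℕ → ℕ) : Prop :=
  Antitone lam ∧ ∀ i, m ≤ i → lam i = 0

/-- The dual Grothendieck polynomial
`g_λ(x_1,…,x_n) = Σ_{π : sh(π) = λ, entries ≤ n} ∏_i x_i^{c_i(π)}`. -/
noncomputable def dualG (lam : ℕ → ℕ) (n : ℕ) (x : Fin n → ℝ) : ℝ :=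
  ∑' π : {π : PlanePartition // HasShape π lam ∧ ∀ i j, π.entry i j ≤ n},
    ∏ ℓ : Fin n, x ℓ ^ colCount π.1 (ℓ.1 + 1)

/-- A unit step of a directed lattice path. -/
def IsStep (a b : ℕ × ℕ) : Prop :=
  b = (a.1 + 1, a.2) ∨ b = (a.1, a.2 + 1)

/-- `p` is a directed lattice path from `s` to `t`. -/
def IsDirPath (p : List (ℕ × ℕ)) (s t : ℕ × ℕ) : Prop :=
  p.head? = some s ∧ p.getLast? = some t ∧ p.Chain' IsStep

/-- The sum of the weights `W` along the path `p`. -/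
def pathSum (W : ℕ → ℕ → ℕ) (p : List (ℕ × ℕ)) : ℕ :=
  (p.map fun a => W a.1 a.2).sum

/-- Last-passage time from `s` to `(m, n)` for the weight matrix `W` (1-indexed). -/
noncomputable def lpt (W : ℕ → ℕ → ℕ) (s : ℕ × ℕ) (m n : ℕ) : ℕ :=
  sSup {v | ∃ p, IsDirPath p s (m, n) ∧ v = pathSum W p}

/-- Extend an `m × n` matrix (indexed from 0) to a 1-indexed matrix on `ℕ × ℕ`, zero outside. -/
def ext (m n : ℕ) (w : Fin m → Fin n → ℕ) : ℕ → ℕ → ℕ := fun i j =>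
  if hi : i - 1 < m then if hj : j - 1 < n then w ⟨i - 1, hi⟩ ⟨j - 1, hj⟩ else 0 else 0

/-- Probability weight of a fixed `m × n` matrix of outcomes under independent geometric
entries: entry in column `ℓ` takes value `k` with probability `(1 - q_ℓ) q_ℓ^k`. -/
noncomputable def geomWt {m n : ℕ} (q : Fin n → ℝ) (w : Fin m → Fin n → ℕ) : ℝ :=
  ∏ i : Fin m, ∏ ℓ : Fin n, (1 - q ℓ) * q ℓ ^ w i ℓ

/-- Probability of an event `E` for an `m × n` matrix of independent geometric entries
with column parameters `q`. -/
noncomputable def geomProb {m n : ℕ} (q : Fin n → ℝ) (E : Set (Fin m → Fin n → ℕ)) : ℝ :=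
  ∑' w : E, geomWt q w.1

/-- The complete homogeneous symmetric polynomial `h_a(x_1,…,x_N)`: the sum of all
monomials of degree `a`. -/
noncomputable def hpoly (a N : ℕ) (x : Fin N → ℝ) : ℝ :=
  ∑ f ∈ Finset.univ.filter (fun f : Fin a → Fin N => ∀ i j, i ≤ j → f i ≤ f j),
    ∏ t, x (f t)

/-- `h` with an integer index, vanishing for negative degrees. -/
noncomputable def hpolyZ (a : ℤ) (N : ℕ) (x : Fin N → ℝ) : ℝ :=
  if 0 ≤ a then hpoly a.toNat N x else 0

/-- The Schur polynomial of `λ` (at most `m` parts) via the Jacobi–Trudi determinant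
`s_λ = det[h_{λ_i - i + j}]_{i,j=1}^m`. -/
noncomputable def schur (lam : ℕ → ℕ) (m N : ℕ) (x : Fin N → ℝ) : ℝ :=
  Matrix.det (Matrix.of fun i j : Fin m =>
    hpolyZ ((lam i.1 : ℤ) - (i.1 + 1) + (j.1 + 1)) N x)

/-- The rectangular partition `(a^m)` as a function `ℕ → ℕ`. -/
def rectPart (a m : ℕ) : ℕ → ℕ := fun k => if k < m then a else 0

namespace PlanePartition

lemma ext' {π π' : PlanePartition} (h : π.entry = π'.entry) : π = π' := by
  cases π; cases π'; subst h; rfl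

lemma rowAnti (π : PlanePartition) (i : ℕ) : Antitone (fun j => π.entry i j) :=
  antitone_nat_of_succ_le (π.row_dec i)

lemma colAnti (π : PlanePartition) (j : ℕ) : Antitone (fun i => π.entry i j) :=
  antitone_nat_of_succ_le (fun i => π.col_dec i j)

lemma rowFinite (π : PlanePartition) (i : ℕ) : {j | π.entry i j ≠ 0}.Finite := by
  have hinj : Set.InjOn (fun j => ((i, j) : ℕ × ℕ))
      ((fun j => ((i, j) : ℕ × ℕ)) ⁻¹' (Function.support fun p : ℕ × ℕ => π.entry p.1 p.2)) := by
    intro a _ b _ h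
    simpa using h
  have := (π.finite_support).preimage hinj
  exact this.subset (fun j hj => hj)

lemma posFinite (π : PlanePartition) (i : ℕ) : {j | 0 < π.entry i j}.Finite :=
  (π.rowFinite i).subset (fun j hj => by simp at hj ⊢; omega)

lemma part_antitone (π : PlanePartition) : Antitone (part π) := by
  apply antitone_nat_of_succ_le
  intro k
  apply Set.ncard_le_ncard _ (π.posFinite k)
  intro j hj
  simp only [Set.mem_setOf_eq] at hj ⊢
  have := π.col_dec k j
  omega

lemma row_eq_zero (π : PlanePartition) {i : ℕ} (h : part π i = 0) (j : ℕ) :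
    π.entry i j = 0 := by
  have hemp := (Set.ncard_eq_zero (π.posFinite i)).mp h
  by_contra hc
  have : j ∈ {j | 0 < π.entry i j} := by simp; omega
  rw [hemp] at this
  exact this

noncomputable def NP (π : PlanePartition) (i ℓ : ℕ) : ℕ := sInf {j | π.entry i j < ℓ}

lemma NP_nonempty (π : PlanePartition) (i : ℕ) {ℓ : ℕ} (hℓ : 1 ≤ ℓ) :
    {j | π.entry i j < ℓ}.Nonempty := by
  obtain ⟨j, hj⟩ : ∃ j, π.entry i j = 0 := by
    by_contra h
    push_neg at h
    have huniv : {j | π.entry i j ≠ 0} = Set.univ := Set.eq_univ_of_forall h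
    have := π.rowFinite i
    rw [huniv] at this
    exact Set.infinite_univ this
  exact ⟨j, by simp [hj]; omega⟩

lemma lt_NP_iff (π : PlanePartition) (i j : ℕ) {ℓ : ℕ} (hℓ : 1 ≤ ℓ) :
    j < NP π i ℓ ↔ ℓ ≤ π.entry i j := by
  constructor
  · intro h
    by_contra hc
    push_neg at hc
    exact (Nat.notMem_of_lt_sInf h) hc
  · intro h
    by_contra hc
    push_neg at hc
    have h1 : π.entry i (NP π i ℓ) < ℓ := Nat.sInf_mem (NP_nonempty π i hℓ)
    have h2 : π.entry i j ≤ π.entry i (NP π i ℓ) := π.rowAnti i hc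
    omega

lemma NP_le_iff (π : PlanePartition) (i j : ℕ) {ℓ : ℕ} (hℓ : 1 ≤ ℓ) :
    NP π i ℓ ≤ j ↔ π.entry i j < ℓ := by
  have := lt_NP_iff π i j hℓ
  omega

lemma NP_anti_right (π : PlanePartition) (i : ℕ) {ℓ ℓ' : ℕ} (h1 : 1 ≤ ℓ) (h : ℓ ≤ ℓ') :
    NP π i ℓ' ≤ NP π i ℓ := by
  apply Nat.sInf_le
  have : π.entry i (NP π i ℓ) < ℓ := Nat.sInf_mem (NP_nonempty π i h1)
  simp only [Set.mem_setOf_eq]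
  omega

lemma NP_anti_left (π : PlanePartition) {i i' : ℕ} (h : i ≤ i') {ℓ : ℕ} (h1 : 1 ≤ ℓ) :
    NP π i' ℓ ≤ NP π i ℓ := by
  apply Nat.sInf_le
  have h2 : π.entry i (NP π i ℓ) < ℓ := Nat.sInf_mem (NP_nonempty π i h1)
  have h3 : π.entry i' (NP π i ℓ) ≤ π.entry i (NP π i ℓ) := π.colAnti _ h
  simp only [Set.mem_setOf_eq]
  omega

lemma NP_eq_zero_of_part_zero (π : PlanePartition) {i : ℕ} (h : part π i = 0) {ℓ : ℕ}
    (hℓ : 1 ≤ ℓ) : NP π i ℓ = 0 := by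
  have : (0 : ℕ) ∈ {j | π.entry i j < ℓ} := by
    simp only [Set.mem_setOf_eq]
    have := π.row_eq_zero h 0
    omega
  exact Nat.le_zero.mp (Nat.sInf_le this)

lemma NP_eq_zero_of_gt (π : PlanePartition) (i : ℕ) {n ℓ : ℕ} (hle : ∀ i j, π.entry i j ≤ n)
    (h : n < ℓ) : NP π i ℓ = 0 := by
  have : (0 : ℕ) ∈ {j | π.entry i j < ℓ} := by
    simp only [Set.mem_setOf_eq]
    have := hle i 0
    omega
  exact Nat.le_zero.mp (Nat.sInf_le this)

lemma dstat_set (π : PlanePartition) (i : ℕ) {ℓ : ℕ} (hℓ : 1 ≤ ℓ) :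
    {j | π.entry i j = ℓ ∧ π.entry (i + 1) j < ℓ} =
      ↑(Finset.Ico (max (NP π i (ℓ + 1)) (NP π (i + 1) ℓ)) (NP π i ℓ)) := by
  ext j
  simp only [Set.mem_setOf_eq, Finset.coe_Ico, Set.mem_Ico, max_le_iff]
  have h1 := lt_NP_iff π i j hℓ
  have h2 := NP_le_iff π i j (show 1 ≤ ℓ + 1 by omega)
  have h3 := NP_le_iff π (i + 1) j hℓ
  omega

lemma dstat_eq (π : PlanePartition) (i : ℕ) {ℓ : ℕ} (hℓ : 1 ≤ ℓ) :
    dstat π i ℓ = NP π i ℓ - max (NP π i (ℓ + 1)) (NP π (i + 1) ℓ) := by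
  rw [dstat, dstat_set π i hℓ, Set.ncard_coe_finset, Nat.card_Ico]

lemma colCount_eq (π : PlanePartition) {m : ℕ} (hT : ∀ k, m ≤ k → part π k = 0)
    {ℓ : ℕ} (hℓ : 1 ≤ ℓ) :
    colCount π ℓ = ∑ i ∈ Finset.range m, dstat π i ℓ := by
  have hmemIco : ∀ i j, (j ∈ Finset.Ico (max (NP π i (ℓ + 1)) (NP π (i + 1) ℓ)) (NP π i ℓ)) ↔
      (π.entry i j = ℓ ∧ π.entry (i + 1) j < ℓ) := by
    intro i j
    have := dstat_set π i hℓ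
    constructor
    · intro h
      have : j ∈ ({j | π.entry i j = ℓ ∧ π.entry (i + 1) j < ℓ} : Set ℕ) := by
        rw [this]; exact_mod_cast h
      exact this
    · intro h
      have h2 : j ∈ ({j | π.entry i j = ℓ ∧ π.entry (i + 1) j < ℓ} : Set ℕ) := h
      rw [this] at h2; exact_mod_cast h2
  have key : {j | ∃ i, π.entry i j = ℓ} =
      ↑((Finset.range m).biUnion fun i =>
        Finset.Ico (max (NP π i (ℓ + 1)) (NP π (i + 1) ℓ)) (NP π i ℓ)) := by
    ext j
    simp only [Set.mem_setOf_eq, Finset.coe_biUnion, Finset.coe_Ico, Set.mem_iUnion,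
      Finset.mem_coe, Finset.mem_range]
    constructor
    · rintro ⟨i, hi⟩
      set I := {i' | π.entry i' j = ℓ} with hI
      have hbdd : ∀ i' ∈ I, i' < m := by
        intro i' hi'
        by_contra hcon
        push_neg at hcon
        have := π.row_eq_zero (hT i' hcon) j
        simp only [hI, Set.mem_setOf_eq] at hi'
        omega
      have hne : I.Nonempty := ⟨i, hi⟩
      have hbdd' : BddAbove I := ⟨m, fun x hx => (hbdd x hx).le⟩
      have hmem : sSup I ∈ I := Nat.sSup_mem hne hbdd'
      refine ⟨sSup I, hbdd _ hmem, ?_⟩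
      have hval : π.entry (sSup I) j = ℓ := hmem
      have hnext : π.entry (sSup I + 1) j < ℓ := by
        have hle : π.entry (sSup I + 1) j ≤ ℓ := hval ▸ π.col_dec (sSup I) j
        rcases Nat.lt_or_ge (π.entry (sSup I + 1) j) ℓ with h | h
        · exact h
        · exfalso
          have : sSup I + 1 ∈ I := by
            show π.entry (sSup I + 1) j = ℓ; omega
          have := le_csSup hbdd' this
          omega
      have := (hmemIco (sSup I) j).mpr ⟨hval, hnext⟩
      simpa [Finset.mem_Ico, max_le_iff] using this
    · rintro ⟨i, _, hmem⟩
      refine ⟨i, ?_⟩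
      have := (hmemIco i j).mp (by simpa [Finset.mem_Ico, max_le_iff] using hmem)
      exact this.1
  rw [colCount, key, Set.ncard_coe_finset, Finset.card_biUnion]
  · apply Finset.sum_congr rfl
    intro i _
    rw [dstat_eq π i hℓ, Nat.card_Ico]
  · intro x _ y _ hxy
    have disj : ∀ a b : ℕ, a < b →
        Disjoint (Finset.Ico (max (NP π a (ℓ + 1)) (NP π (a + 1) ℓ)) (NP π a ℓ))
          (Finset.Ico (max (NP π b (ℓ + 1)) (NP π (b + 1) ℓ)) (NP π b ℓ)) := by
      intro a b hab
      rw [Finset.disjoint_left]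
      intro j hja hjb
      have h1 := (hmemIco a j).mp hja
      have h2 := (hmemIco b j).mp hjb
      have : π.entry b j ≤ π.entry (a + 1) j := π.colAnti j (by omega)
      omega
    rcases Nat.lt_or_ge x y with h | h
    · exact disj x y h
    · exact (disj y x (by omega)).symm

end PlanePartition
section
variable {mm nn : ℕ}

def NarrF (m n : ℕ) (d : ℕ → ℕ → ℕ) (i ℓ : ℕ) : ℕ :=
  if h : i < m ∧ 1 ≤ ℓ ∧ ℓ ≤ n then
    d i ℓ + max (NarrF m n d (i + 1) ℓ) (NarrF m n d i (ℓ + 1))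
  else 0
termination_by (m - i) + (n + 1 - ℓ)
decreasing_by
  · omega
  · omega

lemma NarrF_of_neg {m n : ℕ} (d : ℕ → ℕ → ℕ) {i ℓ : ℕ} (h : ¬(i < m ∧ 1 ≤ ℓ ∧ ℓ ≤ n)) :
    NarrF m n d i ℓ = 0 := by
  rw [NarrF]; simp [h]

lemma NarrF_rec {m n : ℕ} (d : ℕ → ℕ → ℕ) {i ℓ : ℕ} (h : i < m ∧ 1 ≤ ℓ ∧ ℓ ≤ n) :
    NarrF m n d i ℓ = d i ℓ + max (NarrF m n d (i + 1) ℓ) (NarrF m n d i (ℓ + 1)) := by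
  rw [NarrF]; simp [h]

lemma NarrF_anti_right_succ {m n : ℕ} (d : ℕ → ℕ → ℕ) (i : ℕ) {ℓ : ℕ} (hℓ : 1 ≤ ℓ) :
    NarrF m n d i (ℓ + 1) ≤ NarrF m n d i ℓ := by
  by_cases h : i < m ∧ 1 ≤ ℓ ∧ ℓ ≤ n
  · rw [NarrF_rec d h]; omega
  · have : ¬(i < m ∧ 1 ≤ ℓ + 1 ∧ ℓ + 1 ≤ n) := by omega
    rw [NarrF_of_neg d this]; omega

lemma NarrF_anti_left_succ {m n : ℕ} (d : ℕ → ℕ → ℕ) (i : ℕ) {ℓ : ℕ} (hℓ : 1 ≤ ℓ) :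
    NarrF m n d (i + 1) ℓ ≤ NarrF m n d i ℓ := by
  by_cases h : i < m ∧ 1 ≤ ℓ ∧ ℓ ≤ n
  · rw [NarrF_rec d h]; omega
  · have : ¬(i + 1 < m ∧ 1 ≤ ℓ ∧ ℓ ≤ n) := by omega
    rw [NarrF_of_neg d this]; omega

lemma NarrF_anti_right {m n : ℕ} (d : ℕ → ℕ → ℕ) (i : ℕ) {ℓ ℓ' : ℕ} (hℓ : 1 ≤ ℓ)
    (h : ℓ ≤ ℓ') : NarrF m n d i ℓ' ≤ NarrF m n d i ℓ := by
  induction ℓ', h using Nat.le_induction with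
  | base => exact le_refl _
  | succ k hk ih => exact le_trans (NarrF_anti_right_succ d i (by omega)) ih

lemma NarrF_anti_left {m n : ℕ} (d : ℕ → ℕ → ℕ) {i i' : ℕ} (h : i ≤ i') {ℓ : ℕ}
    (hℓ : 1 ≤ ℓ) : NarrF m n d i' ℓ ≤ NarrF m n d i ℓ := by
  induction i', h using Nat.le_induction with
  | base => exact le_refl _
  | succ k hk ih => exact le_trans (NarrF_anti_left_succ d k hℓ) ih

lemma NarrF_unique {m n : ℕ} (d : ℕ → ℕ → ℕ) (A : ℕ → ℕ → ℕ)
    (h0 : ∀ i ℓ, ¬(i < m ∧ 1 ≤ ℓ ∧ ℓ ≤ n) → A i ℓ = 0)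
    (hrec : ∀ i ℓ, (i < m ∧ 1 ≤ ℓ ∧ ℓ ≤ n) →
      A i ℓ = d i ℓ + max (A (i + 1) ℓ) (A i (ℓ + 1))) :
    ∀ i ℓ, A i ℓ = NarrF m n d i ℓ := by
  have key : ∀ k i ℓ, (m - i) + (n + 1 - ℓ) ≤ k → A i ℓ = NarrF m n d i ℓ := by
    intro k
    induction k with
    | zero =>
      intro i ℓ hk
      have h : ¬(i < m ∧ 1 ≤ ℓ ∧ ℓ ≤ n) := by omega
      rw [h0 i ℓ h, NarrF_of_neg d h]
    | succ k ih =>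
      intro i ℓ hk
      by_cases h : i < m ∧ 1 ≤ ℓ ∧ ℓ ≤ n
      · rw [hrec i ℓ h, NarrF_rec d h, ih (i + 1) ℓ (by omega), ih i (ℓ + 1) (by omega)]
      · rw [h0 i ℓ h, NarrF_of_neg d h]
  exact fun i ℓ => key ((m - i) + (n + 1 - ℓ)) i ℓ le_rfl

end

section Rebuild
open PlanePartition

variable (m n : ℕ) (d : ℕ → ℕ → ℕ)

noncomputable def rEnt (i j : ℕ) : ℕ := sInf {c | NarrF m n d i (c + 1) ≤ j}

lemma rEnt_nonempty (i j : ℕ) : {c | NarrF m n d i (c + 1) ≤ j}.Nonempty := by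
  refine ⟨n, ?_⟩
  have : ¬(i < m ∧ 1 ≤ n + 1 ∧ n + 1 ≤ n) := by omega
  simp only [Set.mem_setOf_eq, NarrF_of_neg d this]
  omega

lemma rEnt_le_iff (i j c : ℕ) : rEnt m n d i j ≤ c ↔ NarrF m n d i (c + 1) ≤ j := by
  constructor
  · intro h
    have hmem : rEnt m n d i j ∈ {c | NarrF m n d i (c + 1) ≤ j} :=
      Nat.sInf_mem (rEnt_nonempty m n d i j)
    have : NarrF m n d i (c + 1) ≤ NarrF m n d i (rEnt m n d i j + 1) :=
      NarrF_anti_right d i (by omega) (by omega)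
    exact le_trans this hmem
  · intro h
    exact Nat.sInf_le h

noncomputable def rebuild : PlanePartition where
  entry := rEnt m n d
  finite_support := by
    apply Set.Finite.subset (Set.finite_Iio m |>.prod (Set.finite_Iio (NarrF m n d 0 1)))
    rintro ⟨i, j⟩ hp
    simp only [Function.mem_support] at hp
    have h1 : ¬ (rEnt m n d i j ≤ 0) := by omega
    rw [rEnt_le_iff] at h1
    push_neg at h1
    simp only [Set.mem_prod, Set.mem_Iio]
    constructor
    · -- i < m
      by_contra hc
      have : ¬(i < m ∧ 1 ≤ 1 ∧ 1 ≤ n) := by omega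
      rw [NarrF_of_neg d this] at h1
      omega
    · -- j < NarrF m n d 0 1
      have h1' : j < NarrF m n d i 1 := h1
      have := NarrF_anti_left (m := m) (n := n) d (Nat.zero_le i) (le_refl 1)
      omega
  row_dec := by
    intro i j
    rw [rEnt_le_iff]
    have := (rEnt_le_iff m n d i j (rEnt m n d i j)).mp le_rfl
    omega
  col_dec := by
    intro i j
    rw [rEnt_le_iff]
    have h1 := (rEnt_le_iff m n d i j (rEnt m n d i j)).mp le_rfl
    have h2 := NarrF_anti_left_succ (m := m) (n := n) d i (ℓ := rEnt m n d i j + 1) (by omega)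
    omega

lemma rebuild_NP (i : ℕ) {ℓ : ℕ} (hℓ : 1 ≤ ℓ) :
    NP (rebuild m n d) i ℓ = NarrF m n d i ℓ := by
  have hset : {j | (rebuild m n d).entry i j < ℓ} = {j | NarrF m n d i ℓ ≤ j} := by
    ext j
    simp only [Set.mem_setOf_eq]
    have h : (rebuild m n d).entry i j ≤ ℓ - 1 ↔ NarrF m n d i (ℓ - 1 + 1) ≤ j := by
      show rEnt m n d i j ≤ ℓ - 1 ↔ _
      exact rEnt_le_iff m n d i j (ℓ - 1)
    have h2 : ℓ - 1 + 1 = ℓ := by omega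
    rw [h2] at h
    omega
  rw [NP, hset]
  apply le_antisymm
  · exact Nat.sInf_le (by simp)
  · have : sInf {j | NarrF m n d i ℓ ≤ j} ∈ {j | NarrF m n d i ℓ ≤ j} :=
      Nat.sInf_mem ⟨NarrF m n d i ℓ, by simp⟩
    exact this

lemma rebuild_entry_le (i j : ℕ) : (rebuild m n d).entry i j ≤ n := by
  show rEnt m n d i j ≤ n
  apply (rEnt_le_iff m n d i j n).mpr
  rw [NarrF_of_neg d (by omega)]
  omega

lemma rebuild_part_zero {k : ℕ} (hk : m ≤ k) : part (rebuild m n d) k = 0 := by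
  have hemp : {j | 0 < (rebuild m n d).entry k j} = ∅ := by
    ext j
    simp only [Set.mem_setOf_eq, Set.mem_empty_iff_false, iff_false, not_lt]
    show (rebuild m n d).entry k j ≤ 0
    show rEnt m n d k j ≤ 0
    apply (rEnt_le_iff m n d k j 0).mpr
    rw [NarrF_of_neg d (by omega)]
    omega
  rw [part, hemp, Set.ncard_empty]

end Rebuild

section Equivalence
open PlanePartition

def Tset (m n : ℕ) : Set PlanePartition :=
  {π | (∀ i j, π.entry i j ≤ n) ∧ ∀ k, m ≤ k → part π k = 0}

def dext (m n : ℕ) (d : Fin m → Fin n → ℕ) : ℕ → ℕ → ℕ := fun i ℓ =>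
  if h : i < m ∧ 1 ≤ ℓ ∧ ℓ ≤ n then d ⟨i, h.1⟩ ⟨ℓ - 1, by omega⟩ else 0

lemma NP_eq_NarrF {m n : ℕ} {π : PlanePartition} (hπ : π ∈ Tset m n)
    (d : ℕ → ℕ → ℕ) (hd : ∀ i ℓ, (i < m ∧ 1 ≤ ℓ ∧ ℓ ≤ n) → d i ℓ = dstat π i ℓ) :
    ∀ i ℓ, NP π i ℓ = NarrF m n d i ℓ := by
  obtain ⟨hle, hz⟩ := hπ
  apply NarrF_unique
  · intro i ℓ h
    by_cases hℓ0 : ℓ = 0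
    · subst hℓ0
      have : {j | π.entry i j < 0} = ∅ := by simp
      rw [NP, this, Nat.sInf_empty]
    · have hℓ : 1 ≤ ℓ := by omega
      by_cases hn : n < ℓ
      · exact NP_eq_zero_of_gt π i hle hn
      · have him : m ≤ i := by omega
        exact NP_eq_zero_of_part_zero π (hz i him) hℓ
  · intro i ℓ h
    have hℓ : 1 ≤ ℓ := h.2.1
    rw [hd i ℓ h, dstat_eq π i hℓ]
    have h1 : NP π i (ℓ + 1) ≤ NP π i ℓ := NP_anti_right π i hℓ (by omega)
    have h2 : NP π (i + 1) ℓ ≤ NP π i ℓ := NP_anti_left π (by omega) hℓ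
    have h3 : max (NP π (i + 1) ℓ) (NP π i (ℓ + 1)) = max (NP π i (ℓ + 1)) (NP π (i + 1) ℓ) :=
      max_comm _ _
    have h4 : max (NP π i (ℓ + 1)) (NP π (i + 1) ℓ) ≤ NP π i ℓ := max_le h1 h2
    omega

lemma rebuild_mem_Tset (m n : ℕ) (d : ℕ → ℕ → ℕ) : rebuild m n d ∈ Tset m n :=
  ⟨rebuild_entry_le m n d, fun k hk => rebuild_part_zero m n d hk⟩

noncomputable def pEquiv (m n : ℕ) : ↥(Tset m n) ≃ (Fin m → Fin n → ℕ) where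
  toFun t := fun i ℓ => dstat t.1 i.1 (ℓ.1 + 1)
  invFun d := ⟨rebuild m n (dext m n d), rebuild_mem_Tset m n (dext m n d)⟩
  left_inv t := by
    obtain ⟨π, hπ⟩ := t
    apply Subtype.ext
    apply PlanePartition.ext'
    funext i j
    have hd : ∀ i ℓ, (i < m ∧ 1 ≤ ℓ ∧ ℓ ≤ n) →
        dext m n (fun i ℓ => dstat π i.1 (ℓ.1 + 1)) i ℓ = dstat π i ℓ := by
      intro i ℓ h
      simp only [dext, dif_pos h]
      congr 1
      omega
    have hNP := NP_eq_NarrF hπ _ hd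
    show rEnt m n _ i j = π.entry i j
    rw [rEnt]
    have hset : {c | NarrF m n (dext m n fun i ℓ => dstat π i.1 (ℓ.1 + 1)) i (c + 1) ≤ j}
        = {c | π.entry i j ≤ c} := by
      ext c
      simp only [Set.mem_setOf_eq]
      rw [← hNP i (c + 1), NP_le_iff π i j (by omega)]
      omega
    rw [hset]
    apply le_antisymm
    · exact Nat.sInf_le (by simp)
    · have : sInf {c | π.entry i j ≤ c} ∈ {c | π.entry i j ≤ c} :=
        Nat.sInf_mem ⟨π.entry i j, by simp⟩
      exact this
  right_inv d := by
    funext i ℓ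
    simp only
    set L := ℓ.1 + 1 with hL
    have hcond : (i.1 < m ∧ 1 ≤ L ∧ L ≤ n) := ⟨i.2, by omega, by have := ℓ.2; omega⟩
    have h1 : 1 ≤ L := by omega
    rw [dstat_eq (rebuild m n (dext m n d)) i.1 h1,
      rebuild_NP m n _ i.1 h1, rebuild_NP m n _ i.1 (show 1 ≤ L + 1 by omega),
      rebuild_NP m n _ (i.1 + 1) h1]
    have hrec := NarrF_rec (m := m) (n := n) (dext m n d) hcond
    have hval : dext m n d i.1 L = d i ℓ := by
      simp only [dext, dif_pos hcond]
      congr 1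
      all_goals (apply Fin.ext; simp [hL])
    have ha : NarrF m n (dext m n d) i.1 (L + 1) ≤ NarrF m n (dext m n d) i.1 L :=
      NarrF_anti_right_succ _ _ h1
    have hb : NarrF m n (dext m n d) (i.1 + 1) L ≤ NarrF m n (dext m n d) i.1 L :=
      NarrF_anti_left_succ _ _ h1
    have h3 : max (NarrF m n (dext m n d) (i.1 + 1) L) (NarrF m n (dext m n d) i.1 (L + 1))
        = max (NarrF m n (dext m n d) i.1 (L + 1)) (NarrF m n (dext m n d) (i.1 + 1) L) :=
      max_comm _ _
    have h4 := max_le ha hb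
    omega

end Equivalence

section Tsum
open scoped ENNReal

lemma tsum_pi_fin : ∀ (k : ℕ) (g : Fin k → ℕ → ℝ≥0∞),
    ∑' f : Fin k → ℕ, ∏ i, g i (f i) = ∏ i, ∑' x, g i x := by
  intro k
  induction k with
  | zero =>
    intro g
    have huniq : ∀ f : Fin 0 → ℕ, ∏ i, g i (f i) = 1 := by
      intro f
      simp
    rw [tsum_congr huniq]
    simp [tsum_eq_single (fun i => i.elim0 : Fin 0 → ℕ)
      (fun b hb => absurd (funext fun i => i.elim0) hb)]
  | succ k ih =>
    intro g
    rw [← Equiv.tsum_eq (Fin.consEquiv fun _ : Fin (k + 1) => ℕ)]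
    have hterm : ∀ p : ℕ × (Fin k → ℕ),
        (∏ i, g i ((Fin.consEquiv fun _ : Fin (k + 1) => ℕ) p i)) =
          g 0 p.1 * ∏ i : Fin k, g i.succ (p.2 i) := by
      rintro ⟨a, f⟩
      rw [Fin.prod_univ_succ]
      simp [Fin.consEquiv]
    rw [tsum_congr hterm, ENNReal.tsum_prod (f := fun (a : ℕ) (v : Fin k → ℕ) => g 0 a * ∏ i : Fin k, g i.succ (v i))]
    have hinner : ∀ a : ℕ, (∑' f : Fin k → ℕ, g 0 a * ∏ i : Fin k, g i.succ (f i)) =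
        g 0 a * ∏ i : Fin k, ∑' x, g i.succ x := by
      intro a
      rw [ENNReal.tsum_mul_left, ih fun i => g i.succ]
    rw [tsum_congr hinner, ENNReal.tsum_mul_right, Fin.prod_univ_succ]

lemma tsum_pi_prodfin (m n : ℕ) (g : Fin m × Fin n → ℕ → ℝ≥0∞) :
    ∑' F : Fin m × Fin n → ℕ, ∏ p, g p (F p) = ∏ p, ∑' x, g p x := by
  classical
  set e := (finProdFinEquiv : Fin m × Fin n ≃ Fin (m * n)) with he
  set E : (Fin (m * n) → ℕ) ≃ (Fin m × Fin n → ℕ) :=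
    Equiv.arrowCongr e.symm (Equiv.refl ℕ) with hE
  rw [← E.tsum_eq]
  have h1 : ∀ f : Fin (m * n) → ℕ,
      (∏ p, g p (E f p)) = ∏ t : Fin (m * n), g (e.symm t) (f t) := by
    intro f
    rw [← Equiv.prod_comp e.symm (fun p => g p (E f p))]
    apply Finset.prod_congr rfl
    intro t _
    simp [hE, Equiv.arrowCongr]
  rw [tsum_congr h1, tsum_pi_fin (m * n) (fun t => g (e.symm t)),
    ← Equiv.prod_comp e.symm (fun p => ∑' x, g p x)]

end Tsum

section Main
open PlanePartition
open scoped ENNReal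

noncomputable def wt (n : ℕ) (q : Fin n → ℝ) (π : PlanePartition) : ℝ≥0∞ :=
  ∏ ℓ : Fin n, ENNReal.ofReal (q ℓ) ^ colCount π (ℓ.1 + 1)

lemma wt_ne_top (n : ℕ) (q : Fin n → ℝ) (π : PlanePartition) : wt n q π ≠ ⊤ := by
  apply ENNReal.prod_ne_top
  intro ℓ _
  exact ENNReal.pow_ne_top ENNReal.ofReal_ne_top

lemma core_eq (m n : ℕ) (q : Fin n → ℝ) (hq : ∀ i, 0 < q i ∧ q i < 1) :
    ∑' t : ↥(Tset m n), wt n q t.1 = ∏ ℓ : Fin n, (ENNReal.ofReal (1 - q ℓ))⁻¹ ^ m := by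
  rw [← Equiv.tsum_eq (pEquiv m n).symm (fun t => wt n q t.1)]
  have hterm : ∀ d : Fin m → Fin n → ℕ,
      wt n q ((pEquiv m n).symm d).1 = ∏ p : Fin m × Fin n,
        ENNReal.ofReal (q p.2) ^ d p.1 p.2 := by
    intro d
    set t := (pEquiv m n).symm d with ht
    have happ : (fun (i : Fin m) (ℓ : Fin n) => dstat t.1 i.1 (ℓ.1 + 1)) = d :=
      (pEquiv m n).apply_symm_apply d
    have hcol : ∀ ℓ : Fin n, colCount t.1 (ℓ.1 + 1) = ∑ i : Fin m, d i ℓ := by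
      intro ℓ
      rw [colCount_eq t.1 t.2.2 (show 1 ≤ ℓ.1 + 1 by omega)]
      rw [← Fin.sum_univ_eq_sum_range (fun i => dstat t.1 i (ℓ.1 + 1)) m]
      apply Finset.sum_congr rfl
      intro i _
      calc dstat t.1 i.1 (ℓ.1 + 1)
          = (fun (i : Fin m) (ℓ : Fin n) => dstat t.1 i.1 (ℓ.1 + 1)) i ℓ := rfl
        _ = d i ℓ := by rw [happ]
    rw [wt]
    rw [Fintype.prod_prod_type
      (fun p : Fin m × Fin n => ENNReal.ofReal (q p.2) ^ d p.1 p.2)]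
    rw [Finset.prod_comm]
    apply Finset.prod_congr rfl
    intro ℓ _
    show ENNReal.ofReal (q ℓ) ^ colCount t.1 (ℓ.1 + 1)
      = ∏ i : Fin m, ENNReal.ofReal (q ℓ) ^ d i ℓ
    rw [hcol ℓ, Finset.prod_pow_eq_pow_sum]
  rw [tsum_congr hterm]
  rw [← Equiv.tsum_eq (Equiv.curry (Fin m) (Fin n) ℕ)
    (fun d => ∏ p : Fin m × Fin n, ENNReal.ofReal (q p.2) ^ d p.1 p.2)]
  have hcur : ∀ F : Fin m × Fin n → ℕ,
      (∏ p : Fin m × Fin n,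
        ENNReal.ofReal (q p.2) ^ (Equiv.curry (Fin m) (Fin n) ℕ F) p.1 p.2) =
        ∏ p : Fin m × Fin n, ENNReal.ofReal (q p.2) ^ F p := by
    intro F
    apply Finset.prod_congr rfl
    intro p _
    simp [Equiv.curry, Function.curry]
  rw [tsum_congr hcur, tsum_pi_prodfin m n (fun p x => ENNReal.ofReal (q p.2) ^ x)]
  have hgeo : ∀ p : Fin m × Fin n, (∑' x : ℕ, ENNReal.ofReal (q p.2) ^ x) =
      (ENNReal.ofReal (1 - q p.2))⁻¹ := by
    intro p
    rw [ENNReal.tsum_geometric]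
    congr 1
    rw [ENNReal.ofReal_sub 1 (hq p.2).1.le, ENNReal.ofReal_one]
  rw [Finset.prod_congr rfl (fun p _ => hgeo p)]
  rw [Fintype.prod_prod_type
    (fun p : Fin m × Fin n => (ENNReal.ofReal (1 - q p.2))⁻¹)]
  rw [Finset.prod_comm]
  apply Finset.prod_congr rfl
  intro ℓ _
  show (∏ _i : Fin m, (ENNReal.ofReal (1 - q ℓ))⁻¹) = (ENNReal.ofReal (1 - q ℓ))⁻¹ ^ m
  rw [Finset.prod_const, Finset.card_univ, Fintype.card_fin]

lemma key_eq (m n : ℕ) (q : Fin n → ℝ) :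
    (∑' lam : {lam : ℕ → ℕ // IsPartWithParts m lam},
      ∑' π : {π : PlanePartition // HasShape π lam.1 ∧ ∀ i j, π.entry i j ≤ n},
        wt n q π.1)
      = ∑' t : ↥(Tset m n), wt n q t.1 := by
  classical
  have h1 : ∀ lam : {lam : ℕ → ℕ // IsPartWithParts m lam},
      (∑' π : {π : PlanePartition // HasShape π lam.1 ∧ ∀ i j, π.entry i j ≤ n},
        wt n q π.1)
        = ∑' π : PlanePartition,
            ({π : PlanePartition | HasShape π lam.1 ∧ ∀ i j, π.entry i j ≤ n}).indicator
              (wt n q) π :=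
    fun lam => tsum_subtype _ (wt n q)
  rw [tsum_congr h1, ENNReal.tsum_comm]
  have h2 : ∀ π : PlanePartition,
      (∑' lam : {lam : ℕ → ℕ // IsPartWithParts m lam},
        ({π : PlanePartition | HasShape π lam.1 ∧ ∀ i j, π.entry i j ≤ n}).indicator
          (wt n q) π)
        = (Tset m n).indicator (wt n q) π := by
    intro π
    by_cases hπ : π ∈ Tset m n
    · have hlam0 : IsPartWithParts m (part π) := ⟨part_antitone π, hπ.2⟩
      rw [tsum_eq_single (⟨part π, hlam0⟩ : {lam : ℕ → ℕ // IsPartWithParts m lam})]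
      · rw [show ((⟨part π, hlam0⟩ : {lam : ℕ → ℕ // IsPartWithParts m lam}) : ℕ → ℕ)
            = part π from rfl]
        rw [Set.indicator_of_mem
          (show π ∈ {ρ : PlanePartition | HasShape ρ (part π) ∧ ∀ i j, ρ.entry i j ≤ n}
            from ⟨fun k => rfl, hπ.1⟩),
          Set.indicator_of_mem hπ]
      · intro lam' hne
        rw [Set.indicator_of_notMem]
        intro hmem
        apply hne
        apply Subtype.ext
        funext k
        exact (hmem.1 k).symm
    · rw [Set.indicator_of_notMem hπ]
      have h3 : ∀ lam : {lam : ℕ → ℕ // IsPartWithParts m lam},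
          ({π : PlanePartition | HasShape π lam.1 ∧ ∀ i j, π.entry i j ≤ n}).indicator
            (wt n q) π = 0 := by
        intro lam
        rw [Set.indicator_of_notMem]
        intro hmem
        apply hπ
        refine ⟨hmem.2, fun k hk => ?_⟩
        rw [hmem.1 k]
        exact lam.2.2 k hk
      rw [tsum_congr h3, tsum_zero]
  rw [tsum_congr h2, ← tsum_subtype (Tset m n) (wt n q)]

lemma dualG_toReal (n : ℕ) (q : Fin n → ℝ) (hq0 : ∀ i, 0 ≤ q i) (lam : ℕ → ℕ) :
    dualG lam n q =
      (∑' π : {π : PlanePartition // HasShape π lam ∧ ∀ i j, π.entry i j ≤ n},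
        wt n q π.1).toReal := by
  rw [dualG, ENNReal.tsum_toReal_eq
    (f := fun π : {π : PlanePartition // HasShape π lam ∧ ∀ i j, π.entry i j ≤ n} =>
      wt n q π.1)
    (fun π => wt_ne_top n q π.1)]
  apply tsum_congr
  intro π
  rw [wt, ENNReal.toReal_prod]
  apply Finset.prod_congr rfl
  intro ℓ _
  rw [ENNReal.toReal_pow, ENNReal.toReal_ofReal (hq0 ℓ)]


/-- `Σ_{λ ∈ P_m} g_λ(q_1,…,q_n) = ∏_i (1 - q_i)^{-m}`. -/
theorem stmt12 (m n : ℕ) (hm : 1 ≤ m) (hn : 1 ≤ n)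
    (q : Fin n → ℝ) (hq : ∀ i, 0 < q i ∧ q i < 1) :
    ∑' lam : {lam : ℕ → ℕ // IsPartWithParts m lam}, dualG lam.1 n q =
      ∏ i : Fin n, (1 - q i) ^ (-(m : ℤ)) := by
  have hCne : (∏ ℓ : Fin n, (ENNReal.ofReal (1 - q ℓ))⁻¹ ^ m) ≠ ⊤ := by
    apply ENNReal.prod_ne_top
    intro ℓ _
    apply ENNReal.pow_ne_top
    rw [ENNReal.inv_ne_top]
    have := (hq ℓ).2
    simp only [ne_eq, ENNReal.ofReal_eq_zero, not_le]
    linarith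
  have hGne : ∀ lam : {lam : ℕ → ℕ // IsPartWithParts m lam},
      (∑' π : {π : PlanePartition // HasShape π lam.1 ∧ ∀ i j, π.entry i j ≤ n},
        wt n q π.1) ≠ ⊤ := by
    intro lam
    have hle : (∑' π : {π : PlanePartition // HasShape π lam.1 ∧ ∀ i j, π.entry i j ≤ n},
        wt n q π.1) ≤ ∏ ℓ : Fin n, (ENNReal.ofReal (1 - q ℓ))⁻¹ ^ m := by
      rw [← core_eq m n q hq, ← key_eq m n q]
      exact ENNReal.le_tsum lam
    exact fun h => hCne (top_le_iff.mp (h ▸ hle))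
  have hdual : ∀ lam : {lam : ℕ → ℕ // IsPartWithParts m lam},
      dualG lam.1 n q =
        (∑' π : {π : PlanePartition // HasShape π lam.1 ∧ ∀ i j, π.entry i j ≤ n},
          wt n q π.1).toReal :=
    fun lam => dualG_toReal n q (fun i => (hq i).1.le) lam.1
  rw [tsum_congr hdual, ← ENNReal.tsum_toReal_eq hGne, key_eq m n q, core_eq m n q hq,
    ENNReal.toReal_prod]
  apply Finset.prod_congr rfl
  intro ℓ _
  rw [ENNReal.toReal_pow, ENNReal.toReal_inv, ENNReal.toReal_ofReal (by linarith [(hq ℓ).2]),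
    zpow_neg, zpow_natCast, inv_pow]


end Main
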